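/- Let G be the unit grid graph on ℤ × ℤ. Fix an integer j and integers a < b < c < d. Suppose W₁ is a walk in G from (j,a) to (j,c) all of whose vertices have first coordinate at most j, and W₂ is a walk in G from (j,b) to (j,d) all of whose vertices have first coordinate at most j. Then W₁ and W₂ have a common vertex. -/

import Mathlib

/-- The unit grid graph on `ℤ × ℤ`: two points are adjacent iff their `l1` distance is `1`. -/
def unitGrid : SimpleGraph (ℤ × ℤ) where
  Adj p q := |p.1 - q.1| + |p.2 - q.2| = 1
  symm := by
    constructor
    intro p q hpq
    rw [abs_sub_comm q.1 p.1, abs_sub_comm q.2 p.2]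
    exact hpq
  loopless := by
    constructor
    intro p hp
    simp at hp

open SimpleGraph

lemma adj_cases {u v : ℤ × ℤ} (h : unitGrid.Adj u v) :
    (u.1 = v.1 ∧ (u.2 = v.2 + 1 ∨ v.2 = u.2 + 1)) ∨
    (u.2 = v.2 ∧ (u.1 = v.1 + 1 ∨ v.1 = u.1 + 1)) := by
  have h' : |u.1 - v.1| + |u.2 - v.2| = 1 := h
  rcases abs_cases (u.1 - v.1) with ⟨e1, _⟩ | ⟨e1, _⟩ <;>
    rcases abs_cases (u.2 - v.2) with ⟨e2, _⟩ | ⟨e2, _⟩ <;> omega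

/-- Crossing indicator: the (grid) edge `{u,v}` crosses the rightward ray from
`(p.1 + 1/2, p.2 + 1/2)`. -/
def chi (p u v : ℤ × ℤ) : ZMod 2 :=
  if p.1 < u.1 ∧ p.1 < v.1 ∧
      ((u.2 = p.2 ∧ v.2 = p.2 + 1) ∨ (v.2 = p.2 ∧ u.2 = p.2 + 1)) then 1 else 0

def crossW {u v : ℤ × ℤ} (W : unitGrid.Walk u v) (p : ℤ × ℤ) : ZMod 2 :=
  (W.darts.map (fun d => chi p d.fst d.snd)).sum

lemma sum_add_pointwise {α : Type*} (l : List α) (f g : α → ZMod 2) :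
    (l.map (fun x => f x + g x)).sum = (l.map f).sum + (l.map g).sum := by
  induction l with
  | nil => simp
  | cons a l ih => simp [ih]; ring

lemma sum_g {u v : ℤ × ℤ} (W : unitGrid.Walk u v) (g : ℤ × ℤ → ZMod 2) :
    (W.darts.map (fun d => g d.fst + g d.snd)).sum = g u + g v := by
  induction W with
  | nil =>
      simp only [SimpleGraph.Walk.darts_nil, List.map_nil, List.sum_nil]
      have : ∀ x : ZMod 2, 0 = x + x := by decide
      exact this _
  | @cons u w v h W ih =>
      simp only [SimpleGraph.Walk.darts_cons, List.map_cons, List.sum_cons, ih]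
      have : ∀ x y z : ZMod 2, x + y + (y + z) = x + z := by decide
      exact this _ _ _

lemma chi_horiz (x y : ℤ) {u v : ℤ × ℤ} (h : unitGrid.Adj u v)
    (hu : u ≠ (x + 1, y)) (hv : v ≠ (x + 1, y)) :
    chi (x, y) u v = chi (x + 1, y) u v := by
  have hc := adj_cases h
  obtain ⟨u1, u2⟩ := u
  obtain ⟨v1, v2⟩ := v
  simp only [chi, Prod.mk.injEq, not_and, ne_eq] at *
  split_ifs <;> first | rfl | omega

lemma chi_vert (x y : ℤ) {u v : ℤ × ℤ} (h : unitGrid.Adj u v)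
    (hu : u ≠ (x, y + 1)) (hv : v ≠ (x, y + 1)) :
    chi (x, y) u v + chi (x, y + 1) u v =
      (if u.2 = y + 1 ∧ x < u.1 then 1 else 0) +
      (if v.2 = y + 1 ∧ x < v.1 then (1 : ZMod 2) else 0) := by
  have hc := adj_cases h
  obtain ⟨u1, u2⟩ := u
  obtain ⟨v1, v2⟩ := v
  simp only [chi, Prod.mk.injEq, not_and, ne_eq] at *
  split_ifs <;> first | decide | omega

lemma crossW_step_v {r : ℤ × ℤ} (C : unitGrid.Walk r r) (x y : ℤ)
    (hp : (x, y) ∉ C.support) (hq : (x, y + 1) ∉ C.support) :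
    crossW C (x, y) = crossW C (x, y + 1) := by
  have hfst : ∀ d ∈ C.darts, d.fst ∈ C.support := fun d hd =>
    SimpleGraph.Walk.dart_fst_mem_support_of_mem_darts _ hd
  have hsnd : ∀ d ∈ C.darts, d.snd ∈ C.support := fun d hd =>
    SimpleGraph.Walk.dart_snd_mem_support_of_mem_darts _ hd
  have hsum : crossW C (x, y) + crossW C (x, y + 1) = 0 := by
    unfold crossW
    rw [← sum_add_pointwise]
    have heq : (C.darts.map (fun d => chi (x, y) d.fst d.snd + chi (x, y + 1) d.fst d.snd)) =
        (C.darts.map (fun d =>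
          (if d.fst.2 = y + 1 ∧ x < d.fst.1 then 1 else 0) +
          (if d.snd.2 = y + 1 ∧ x < d.snd.1 then (1 : ZMod 2) else 0))) := by
      refine List.map_congr_left (fun d hd => ?_)
      exact chi_vert x y d.adj (fun e => hq (e ▸ hfst d hd)) (fun e => hq (e ▸ hsnd d hd))
    rw [heq]
    have hz : ∀ z : ZMod 2, z + z = 0 := by decide
    exact (sum_g C (fun w => if w.2 = y + 1 ∧ x < w.1 then (1 : ZMod 2) else 0)).trans (hz _)
  have : ∀ a b : ZMod 2, a + b = 0 → a = b := by decide
  exact this _ _ hsum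

lemma crossW_step_h {r : ℤ × ℤ} (C : unitGrid.Walk r r) (x y : ℤ)
    (hq : (x + 1, y) ∉ C.support) :
    crossW C (x, y) = crossW C (x + 1, y) := by
  have hfst : ∀ d ∈ C.darts, d.fst ∈ C.support := fun d hd =>
    SimpleGraph.Walk.dart_fst_mem_support_of_mem_darts _ hd
  have hsnd : ∀ d ∈ C.darts, d.snd ∈ C.support := fun d hd =>
    SimpleGraph.Walk.dart_snd_mem_support_of_mem_darts _ hd
  unfold crossW
  congr 1
  refine List.map_congr_left (fun d hd => ?_)
  exact chi_horiz x y d.adj (fun e => hq (e ▸ hfst d hd)) (fun e => hq (e ▸ hsnd d hd))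

lemma crossW_step {r : ℤ × ℤ} (C : unitGrid.Walk r r) {p q : ℤ × ℤ}
    (h : unitGrid.Adj p q) (hp : p ∉ C.support) (hq : q ∉ C.support) :
    crossW C p = crossW C q := by
  obtain ⟨p1, p2⟩ := p
  obtain ⟨q1, q2⟩ := q
  rcases adj_cases h with ⟨h1, h2 | h2⟩ | ⟨h1, h2 | h2⟩ <;>
    simp only at h1 h2
  · subst h1; subst h2; exact (crossW_step_v C _ _ hq hp).symm
  · subst h1; subst h2; exact crossW_step_v C _ _ hp hq
  · subst h1; subst h2; exact (crossW_step_h C _ _ hp).symm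
  · subst h1; subst h2; exact crossW_step_h C _ _ hq

lemma crossW_const {r s t : ℤ × ℤ} (C : unitGrid.Walk r r) (W : unitGrid.Walk s t)
    (h : ∀ p ∈ W.support, p ∉ C.support) : crossW C s = crossW C t := by
  induction W with
  | nil => rfl
  | @cons u w v hadj W ih =>
      have h1 : crossW C u = crossW C w :=
        crossW_step C hadj (h u (by simp)) (h w (by simp [SimpleGraph.Walk.support_cons]))
      exact h1.trans (ih (fun p hp => h p (by simp [SimpleGraph.Walk.support_cons, hp])))

lemma adj_down (x t : ℤ) : unitGrid.Adj (x, t) (x, t - 1) := by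
  show |x - x| + |t - (t - 1)| = 1
  norm_num

def down (x y : ℤ) : (n : ℕ) → unitGrid.Walk (x, y) (x, y - n)
  | 0 => SimpleGraph.Walk.nil.copy rfl (by norm_num)
  | n + 1 => ((down x y n).concat (adj_down x (y - n))).copy rfl
      (by rw [Prod.mk.injEq]; push_cast; constructor <;> ring)

lemma support_down (x y : ℤ) (n : ℕ) :
    ∀ p ∈ (down x y n).support, p.1 = x ∧ y - n ≤ p.2 ∧ p.2 ≤ y := by
  induction n with
  | zero =>
      intro p hp
      simp only [down, SimpleGraph.Walk.support_copy, SimpleGraph.Walk.support_nil,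
        List.mem_singleton] at hp
      subst hp; refine ⟨rfl, by norm_num, by norm_num⟩
  | succ n ih =>
      intro p hp
      simp only [down, SimpleGraph.Walk.support_copy, SimpleGraph.Walk.support_concat,
        List.concat_eq_append, List.mem_append, List.mem_singleton] at hp
      rcases hp with hp | hp
      · have := ih p hp; push_cast; omega
      · subst hp; push_cast; simp; omega

lemma crossW_down (x y : ℤ) (n : ℕ) (p : ℤ × ℤ) :
    crossW (down x y n) p = if p.1 < x ∧ y - n ≤ p.2 ∧ p.2 < y then 1 else 0 := by
  induction n with
  | zero =>
      simp only [down]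
      unfold crossW
      simp only [SimpleGraph.Walk.darts_copy, SimpleGraph.Walk.darts_nil, List.map_nil,
        List.sum_nil]
      rw [eq_comm, ite_eq_right_iff]
      intro h; exfalso; push_cast at h; omega
  | succ n ih =>
      simp only [down]
      unfold crossW at ih ⊢
      simp only [SimpleGraph.Walk.darts_copy, SimpleGraph.Walk.darts_concat, List.concat_eq_append, List.map_append,
        List.sum_append, List.map_cons, List.map_nil, List.sum_cons, List.sum_nil, add_zero]
      rw [ih]
      show _ + chi p (x, y - n) (x, y - n - 1) = _
      simp only [chi]
      push_cast
      split_ifs <;> first | decide | omega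

lemma crossW_append {u v w : ℤ × ℤ} (W : unitGrid.Walk u v) (W' : unitGrid.Walk v w)
    (p : ℤ × ℤ) : crossW (W.append W') p = crossW W p + crossW W' p := by
  unfold crossW
  rw [SimpleGraph.Walk.darts_append, List.map_append, List.sum_append]

lemma crossW_cons {u v w : ℤ × ℤ} (h : unitGrid.Adj u v) (W : unitGrid.Walk v w)
    (p : ℤ × ℤ) : crossW (SimpleGraph.Walk.cons h W) p = chi p u v + crossW W p := by
  unfold crossW
  simp [SimpleGraph.Walk.darts_cons]

lemma crossW_concat {u v w : ℤ × ℤ} (W : unitGrid.Walk u v) (h : unitGrid.Adj v w)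
    (p : ℤ × ℤ) : crossW (W.concat h) p = crossW W p + chi p v w := by
  unfold crossW
  simp [SimpleGraph.Walk.darts_concat, List.concat_eq_append]

lemma crossW_copy {u v u' v' : ℤ × ℤ} (W : unitGrid.Walk u v) (h1 : u = u') (h2 : v = v')
    (p : ℤ × ℤ) : crossW (W.copy h1 h2) p = crossW W p := by
  subst h1; subst h2; rfl

lemma crossW_half {u v : ℤ × ℤ} (W : unitGrid.Walk u v) (p : ℤ × ℤ)
    (h : ∀ q ∈ W.support, q.1 ≤ p.1) : crossW W p = 0 := by
  unfold crossW
  apply List.sum_eq_zero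
  intro x hx
  rcases List.mem_map.1 hx with ⟨d, hd, rfl⟩
  have h1 := h d.fst (SimpleGraph.Walk.dart_fst_mem_support_of_mem_darts _ hd)
  rw [chi, if_neg]
  rintro ⟨hlt, -⟩
  omega

theorem interleaved_walks_cross_aux (j a b c d : ℤ) (hab : a < b) (hbc : b < c) (hcd : c < d)
    (W₁ : unitGrid.Walk (j, a) (j, c)) (W₂ : unitGrid.Walk (j, b) (j, d))
    (h₁ : ∀ p ∈ W₁.support, p.1 ≤ j) (h₂ : ∀ p ∈ W₂.support, p.1 ≤ j) :
    ∃ p : ℤ × ℤ, p ∈ W₁.support ∧ p ∈ W₂.support := by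
  by_contra hcon
  push_neg at hcon
  set n := (c - a).toNat with hn
  have hnn : (n : ℤ) = c - a := Int.toNat_of_nonneg (by omega)
  have hjc : unitGrid.Adj (j, c) (j + 1, c) := by
    show |j - (j + 1)| + |c - c| = 1
    rw [show j - (j + 1) = -1 by ring]; norm_num
  have hja : unitGrid.Adj ((j + 1 : ℤ), a) (j, a) := by
    show |(j + 1) - j| + |a - a| = 1
    rw [show j + 1 - j = 1 by ring]; norm_num
  have eqa : ((j + 1 : ℤ), c - (n : ℤ)) = ((j + 1 : ℤ), a) := by
    rw [hnn, Prod.mk.injEq]; constructor <;> ring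
  set P : unitGrid.Walk (j, c) (j, a) :=
    SimpleGraph.Walk.cons hjc (((down (j + 1) c n).copy rfl eqa).concat hja) with hP
  set C : unitGrid.Walk (j, a) (j, a) := W₁.append P with hC
  have hPsup : ∀ p ∈ P.support, p = (j, c) ∨ p = (j, a) ∨ p.1 = j + 1 := by
    intro p hp
    rw [hP] at hp
    simp only [SimpleGraph.Walk.support_cons, SimpleGraph.Walk.support_concat,
      SimpleGraph.Walk.support_copy, List.concat_eq_append, List.mem_cons,
      List.mem_append, List.mem_singleton] at hp
    rcases hp with rfl | hp | rfl | h0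
    · exact Or.inl rfl
    · exact Or.inr (Or.inr (support_down _ _ _ p hp).1)
    · exact Or.inr (Or.inl rfl)
    · exact absurd h0 List.not_mem_nil
  have hCsup : ∀ p ∈ W₂.support, p ∉ C.support := by
    intro p hp hmem
    rw [hC, SimpleGraph.Walk.mem_support_append_iff] at hmem
    rcases hmem with h | h
    · exact hcon p h hp
    · rcases hPsup p h with rfl | rfl | h1
      · exact hcon _ W₁.end_mem_support hp
      · exact hcon _ W₁.start_mem_support hp
      · have := h₂ p hp; omega
  have hchi1 : ∀ e : ℤ, chi (j, e) (j, c) (j + 1, c) = 0 := by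
    intro e; rw [chi, if_neg]; rintro ⟨hlt, -⟩; simp at hlt
  have hchi2 : ∀ e : ℤ, chi (j, e) ((j + 1 : ℤ), a) (j, a) = 0 := by
    intro e; rw [chi, if_neg]; rintro ⟨-, hlt, -⟩; simp at hlt
  have hPb : ∀ e : ℤ, crossW P (j, e) =
      if (j : ℤ) < j + 1 ∧ c - (n : ℤ) ≤ e ∧ e < c then 1 else 0 := by
    intro e
    rw [hP, crossW_cons, crossW_concat, crossW_copy, hchi1, hchi2, crossW_down]
    simp
  have hCb : crossW C (j, b) = 1 := by
    rw [hC, crossW_append, crossW_half W₁ _ (by intro q hq; exact h₁ q hq), hPb, if_pos]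
    · simp
    · omega
  have hCd : crossW C (j, d) = 0 := by
    rw [hC, crossW_append, crossW_half W₁ _ (by intro q hq; exact h₁ q hq), hPb, if_neg]
    · simp
    · omega
  have := crossW_const C W₂ hCsup
  rw [hCb, hCd] at this
  exact absurd this (by decide)

/-- Two walks in the unit grid graph staying in the half-plane `{p | p.1 ≤ j}`, the first
from `(j,a)` to `(j,c)` and the second from `(j,b)` to `(j,d)` with `a < b < c < d`,
must share a common vertex. -/
theorem interleaved_walks_cross (j a b c d : ℤ) (hab : a < b) (hbc : b < c) (hcd : c < d)
    (W₁ : unitGrid.Walk (j, a) (j, c)) (W₂ : unitGrid.Walk (j, b) (j, d))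
    (h₁ : ∀ p ∈ W₁.support, p.1 ≤ j) (h₂ : ∀ p ∈ W₂.support, p.1 ≤ j) :
    ∃ p : ℤ × ℤ, p ∈ W₁.support ∧ p ∈ W₂.support :=
  interleaved_walks_cross_aux j a b c d hab hbc hcd W₁ W₂ h₁ h₂
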